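/- Let L be a real symmetric n×n matrix with eigenvalues contained in [0,2] and with 0 an eigenvalue, and let D be similar to q(δ,L) = −(1+2δ)L + δL² for some δ > 0. Then the largest eigenvalue of D is 0, and the second largest eigenvalue λ_{↓2}(D) satisfies q(δ, λ_{↑2}(L)) ≤ λ_{↓2}(D) ≤ max{q(δ, λ_{↑2}(L)), −2}, where λ_{↑2}(L) is the second-smallest eigenvalue of L. -/

import Mathlib

open Matrix Finset

noncomputable def q (δ lam : ℝ) : ℝ := -(1 + 2 * δ) * lam + δ * lam ^ 2

/-- The eigenvalues of a Hermitian real matrix, sorted in increasing order (with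
multiplicity). -/
noncomputable def eigList {n : ℕ} (A : Matrix (Fin n) (Fin n) ℝ) (hA : A.IsHermitian) :
    List ℝ :=
  (Multiset.map hA.eigenvalues Finset.univ.val).sort (· ≤ ·)

/-- Second-smallest eigenvalue. -/
noncomputable def lamUp2 {n : ℕ} (A : Matrix (Fin n) (Fin n) ℝ) (hA : A.IsHermitian) : ℝ :=
  (eigList A hA).getD 1 0

/-- Largest eigenvalue. -/
noncomputable def lamDown1 {n : ℕ} (A : Matrix (Fin n) (Fin n) ℝ) (hA : A.IsHermitian) : ℝ :=
  (eigList A hA).reverse.getD 0 0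

/-- Second-largest eigenvalue. -/
noncomputable def lamDown2 {n : ℕ} (A : Matrix (Fin n) (Fin n) ℝ) (hA : A.IsHermitian) : ℝ :=
  (eigList A hA).reverse.getD 1 0

section Aux

open Polynomial

variable {n : ℕ}

lemma q_zero (δ : ℝ) : q δ 0 = 0 := by simp [q]
lemma q_two (δ : ℝ) : q δ 2 = -2 := by simp [q]; ring
lemma q_neg {δ x : ℝ} (hδ : 0 < δ) (hx : 0 < x) (hx2 : x ≤ 2) : q δ x < 0 := by
  simp only [q]
  nlinarith [mul_nonneg (mul_pos hδ hx).le (sub_nonneg.mpr hx2)]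
lemma q_endpoint {δ a b x : ℝ} (hδ : 0 < δ) (hax : a ≤ x) (hxb : x ≤ b) :
    q δ x ≤ max (q δ a) (q δ b) := by
  rcases le_or_gt (δ * (x + a)) (1 + 2 * δ) with h | h
  · refine le_trans ?_ (le_max_left _ _); simp only [q]
    nlinarith [mul_nonneg (sub_nonneg.mpr hax) (by linarith : (0:ℝ) ≤ (1 + 2*δ) - δ*(x+a))]
  · refine le_trans ?_ (le_max_right _ _); simp only [q]
    nlinarith [mul_nonneg (sub_nonneg.mpr hxb) (by nlinarith : (0:ℝ) ≤ δ*(x+b) - (1 + 2*δ))]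

lemma my_charpoly_conj (U V A : Matrix (Fin n) (Fin n) ℝ) (hUV : U * V = 1) (hVU : V * U = 1) :
    (V * A * U).charpoly = A.charpoly := by
  have key : charmatrix (V * A * U)
      = (C : ℝ →+* ℝ[X]).mapMatrix V * charmatrix A * (C : ℝ →+* ℝ[X]).mapMatrix U := by
    unfold charmatrix
    rw [Matrix.mul_sub, Matrix.sub_mul]
    congr 1
    · rw [← (Matrix.scalar_commute (X : ℝ[X]) (fun r' => Commute.all _ _) _).eq, mul_assoc,
        ← RingHom.map_mul, hVU, _root_.map_one, mul_one]
    · rw [← RingHom.map_mul, ← RingHom.map_mul]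
  show (charmatrix (V * A * U)).det = (charmatrix A).det
  rw [key, det_mul, det_mul, mul_comm, ← mul_assoc, ← det_mul, ← RingHom.map_mul, hUV,
    _root_.map_one, det_one, one_mul]

lemma my_charpoly_diagonal (d : Fin n → ℝ) :
    (diagonal d).charpoly = ∏ i, (X - C (d i)) := by
  have h : charmatrix (diagonal d) = diagonal fun i => X - C (d i) := by
    ext i j
    rcases eq_or_ne i j with rfl | h
    · simp [charmatrix_apply, diagonal_apply_eq]
    · simp [charmatrix_apply, diagonal_apply_ne _ h]
  show (charmatrix (diagonal d)).det = _
  rw [h, det_diagonal]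

lemma my_prod_X_sub_C_inj (f g : Fin n → ℝ)
    (h : ∏ i, (X - C (f i)) = ∏ i, (X - C (g i))) :
    Multiset.map f Finset.univ.val = Multiset.map g Finset.univ.val := by
  have key : ∀ f : Fin n → ℝ,
      (∏ i, (X - C (f i))).roots = Multiset.map f Finset.univ.val := by
    intro f
    rw [Finset.prod_eq_multiset_prod,
      show (Multiset.map (fun i => X - C (f i)) Finset.univ.val)
        = Multiset.map (fun a => X - C a) (Multiset.map f Finset.univ.val) by
        rw [Multiset.map_map]; rfl]
    exact roots_multiset_prod_X_sub_C _
  rw [← key f, ← key g, h]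

lemma my_herm_charpoly {A : Matrix (Fin n) (Fin n) ℝ} (hA : A.IsHermitian) :
    A.charpoly = ∏ i, (X - C (hA.eigenvalues i)) := by
  set U : Matrix (Fin n) (Fin n) ℝ := ↑(hA.eigenvectorUnitary) with hU
  have hUP : U * star U = 1 := (Matrix.mem_unitaryGroup_iff).mp hA.eigenvectorUnitary.2
  have hPU : star U * U = 1 := (Matrix.mem_unitaryGroup_iff').mp hA.eigenvectorUnitary.2
  have hdiag : star U * A * U = diagonal hA.eigenvalues := by
    have := hA.conjStarAlgAut_star_eigenvectorUnitary
    simpa using this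
  have := my_charpoly_conj U (star U) A hUP hPU
  rw [hdiag, my_charpoly_diagonal] at this
  exact this.symm

end Aux

theorem damping_rate_bounds {n : ℕ} (hn : 2 ≤ n)
    (L : Matrix (Fin n) (Fin n) ℝ) (hL : L.IsHermitian)
    (hspec : ∀ i, hL.eigenvalues i ∈ Set.Icc (0 : ℝ) 2)
    (hker : (Finset.univ.filter fun i => hL.eigenvalues i = 0).card = 1)
    (δ : ℝ) (hδ : 0 < δ)
    (M : Matrix (Fin n) (Fin n) ℝ)
    (hMdef : M = (-(1 + 2 * δ)) • L + δ • (L * L)) (hM : M.IsHermitian)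
    (D B : Matrix (Fin n) (Fin n) ℝ) (hB : IsUnit B) (hD : D = B⁻¹ * M * B) :
    D.charpoly = M.charpoly ∧
    lamDown1 M hM = 0 ∧
    q δ (lamUp2 L hL) ≤ lamDown2 M hM ∧
    lamDown2 M hM ≤ max (q δ (lamUp2 L hL)) (-2) := by
  open Polynomial in
  -- Part 1 : similar matrices have the same characteristic polynomial
  have hdet : IsUnit B.det := (Matrix.isUnit_iff_isUnit_det B).mp hB
  have part1 : D.charpoly = M.charpoly := by
    rw [hD]
    exact my_charpoly_conj B B⁻¹ M (Matrix.mul_nonsing_inv B hdet)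
      (Matrix.nonsing_inv_mul B hdet)
  -- Part 2 : eigenvalues of M are the q-images of eigenvalues of L
  set e : Fin n → ℝ := hL.eigenvalues with he
  set U : Matrix (Fin n) (Fin n) ℝ := ↑(hL.eigenvectorUnitary) with hU
  have hUP : U * star U = 1 := (Matrix.mem_unitaryGroup_iff).mp hL.eigenvectorUnitary.2
  have hPU : star U * U = 1 := (Matrix.mem_unitaryGroup_iff').mp hL.eigenvectorUnitary.2
  have hLdiag : star U * L * U = diagonal e := by
    have := hL.conjStarAlgAut_star_eigenvectorUnitary
    simpa using this
  have hL2 : star U * (L * L) * U = diagonal e * diagonal e := by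
    have h : (star U * L * U) * (star U * L * U) = star U * (L * L) * U := by
      calc (star U * L * U) * (star U * L * U)
          = (star U * L) * (U * star U) * (L * U) := by noncomm_ring
        _ = star U * (L * L) * U := by rw [hUP]; noncomm_ring
    rw [← h, hLdiag]
  have hMconj : star U * M * U = diagonal fun i => q δ (e i) := by
    rw [hMdef, Matrix.mul_add, Matrix.add_mul, Matrix.mul_smul, Matrix.smul_mul,
      Matrix.mul_smul, Matrix.smul_mul, hLdiag, hL2, diagonal_mul_diagonal]
    ext i j
    rcases eq_or_ne i j with rfl | hij
    · simp only [Matrix.add_apply, Matrix.smul_apply, Matrix.diagonal_apply_eq,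
        smul_eq_mul, q]; ring
    · simp [Matrix.diagonal_apply_ne _ hij]
  have hMcharpoly : M.charpoly = ∏ i, (X - C (q δ (e i))) := by
    have := my_charpoly_conj U (star U) M hUP hPU
    rw [hMconj, my_charpoly_diagonal] at this
    exact this.symm
  have hroots : Multiset.map hM.eigenvalues Finset.univ.val
      = Multiset.map (fun i => q δ (e i)) Finset.univ.val :=
    my_prod_X_sub_C_inj _ _ (by rw [← my_herm_charpoly hM, hMcharpoly])
  -- Part 3 : analysis of sorted eigenvalue lists
  set s : Multiset ℝ := Multiset.map e Finset.univ.val with hs_def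
  have hcard_s : Multiset.card s = n := by simp [hs_def]
  have hmem_s : ∀ x ∈ s, 0 ≤ x ∧ x ≤ 2 := by
    intro x hx
    obtain ⟨i, _, rfl⟩ := Multiset.mem_map.mp hx
    exact ⟨(hspec i).1, (hspec i).2⟩
  have hcount : Multiset.count 0 s = 1 := by
    rw [hs_def, Multiset.count_map]
    have h1 : Multiset.filter (fun a => (0:ℝ) = e a) Finset.univ.val
        = Multiset.filter (fun a => e a = 0) Finset.univ.val := by
      apply Multiset.filter_congr
      intro a _
      exact eq_comm
    rw [h1, ← Finset.filter_val]
    exact hker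
  have h0s : (0:ℝ) ∈ s := by
    rw [← Multiset.count_pos, hcount]; norm_num
  set s₀ : Multiset ℝ := s.erase 0 with hs₀_def
  have hs_cons : s = 0 ::ₘ s₀ := (Multiset.cons_erase h0s).symm
  have h0s₀ : (0:ℝ) ∉ s₀ := by
    intro h
    have h2 : Multiset.count 0 s = Multiset.count 0 s₀ + 1 := by
      rw [hs_cons, Multiset.count_cons_self]
    have h3 := Multiset.count_pos.mpr h
    omega
  have hmem_s₀ : ∀ x ∈ s₀, 0 < x ∧ x ≤ 2 := by
    intro x hx
    have hxs := Multiset.mem_of_mem_erase hx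
    have h2 := hmem_s x hxs
    have hne : x ≠ 0 := by rintro rfl; exact h0s₀ hx
    exact ⟨lt_of_le_of_ne h2.1 (Ne.symm hne), h2.2⟩
  have hcard₀ : Multiset.card s₀ = n - 1 := by
    rw [hs₀_def, Multiset.card_erase_of_mem h0s, hcard_s]
    exact Nat.pred_eq_sub_one
  have hs₀_ne : s₀ ≠ 0 := by
    intro h
    rw [h] at hcard₀
    simp at hcard₀
    omega
  have hsortL : s.sort (· ≤ ·) = 0 :: s₀.sort (· ≤ ·) := by
    refine (fun hp h1 h2 => List.Perm.eq_of_pairwise' (r := ((· ≤ ·) : ℝ → ℝ → Prop)) h1 h2 hp) ?_ ?_ ?_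
    · apply Multiset.coe_eq_coe.mp
      rw [Multiset.sort_eq, ← Multiset.cons_coe, Multiset.sort_eq]
      exact hs_cons
    · exact Multiset.pairwise_sort _ _
    · rw [List.pairwise_cons]
      exact ⟨fun b hb => (hmem_s₀ b ((Multiset.mem_sort _).mp hb)).1.le,
        Multiset.pairwise_sort _ _⟩
  obtain ⟨μ, l', hμl⟩ : ∃ μ l', s₀.sort (· ≤ ·) = μ :: l' := by
    cases h : s₀.sort (· ≤ ·) with
    | nil =>
      exfalso
      apply hs₀_ne
      have h2 := Multiset.sort_eq s₀ (· ≤ ·)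
      rw [h] at h2
      simpa using h2.symm
    | cons a l => exact ⟨a, l, rfl⟩
  have hμ_mem : μ ∈ s₀ := by
    rw [← Multiset.mem_sort (· ≤ ·), hμl]
    exact List.mem_cons_self
  have hμ_min : ∀ x ∈ s₀, μ ≤ x := by
    intro x hx
    rw [← Multiset.mem_sort (· ≤ ·), hμl] at hx
    rcases List.mem_cons.mp hx with rfl | hx'
    · exact le_refl _
    · have hsor := Multiset.pairwise_sort s₀ (· ≤ ·)
      rw [hμl, List.pairwise_cons] at hsor
      exact hsor.1 x hx'
  have hlamUp2 : lamUp2 L hL = μ := by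
    show (s.sort (· ≤ ·)).getD 1 0 = μ
    rw [hsortL, hμl]
    rfl
  set t : Multiset ℝ := Multiset.map hM.eigenvalues Finset.univ.val with ht_def
  set t₀ : Multiset ℝ := Multiset.map (q δ) s₀ with ht₀_def
  have ht_cons : t = 0 ::ₘ t₀ := by
    rw [hroots]
    have h2 : Multiset.map (fun i => q δ (e i)) Finset.univ.val
        = Multiset.map (q δ) s := by
      rw [hs_def, Multiset.map_map]; rfl
    rw [h2, hs_cons, Multiset.map_cons, q_zero]
  have hmem_t₀ : ∀ y ∈ t₀, y < 0 := by
    intro y hy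
    obtain ⟨x, hx, rfl⟩ := Multiset.mem_map.mp hy
    exact q_neg hδ (hmem_s₀ x hx).1 (hmem_s₀ x hx).2
  have ht₀_ne : t₀ ≠ 0 := by
    intro h
    apply hs₀_ne
    simpa [ht₀_def] using h
  have hsortM : t.sort (· ≤ ·) = t₀.sort (· ≤ ·) ++ [0] := by
    refine (fun hp h1 h2 => List.Perm.eq_of_pairwise' (r := ((· ≤ ·) : ℝ → ℝ → Prop)) h1 h2 hp) ?_ ?_ ?_
    · apply Multiset.coe_eq_coe.mp
      rw [Multiset.sort_eq, ← Multiset.coe_add, Multiset.sort_eq, Multiset.coe_singleton,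
        add_comm, Multiset.singleton_add]
      exact ht_cons
    · exact Multiset.pairwise_sort _ _
    · refine List.pairwise_append.mpr ⟨Multiset.pairwise_sort _ _, List.pairwise_singleton _ _, ?_⟩
      intro x hx y hy
      rw [List.mem_singleton] at hy
      subst hy
      exact (hmem_t₀ x ((Multiset.mem_sort _).mp hx)).le
  obtain ⟨ν, r, hνr⟩ : ∃ ν r, (t₀.sort (· ≤ ·)).reverse = ν :: r := by
    cases h : (t₀.sort (· ≤ ·)).reverse with
    | nil =>
      exfalso
      apply ht₀_ne
      have h2 := List.reverse_eq_nil_iff.mp h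
      have h3 := Multiset.sort_eq t₀ (· ≤ ·)
      rw [h2] at h3
      simpa using h3.symm
    | cons a l => exact ⟨a, l, rfl⟩
  have hν_mem : ν ∈ t₀ := by
    have h2 : ν ∈ (t₀.sort (· ≤ ·)).reverse := by
      rw [hνr]; exact List.mem_cons_self
    rw [List.mem_reverse] at h2
    exact (Multiset.mem_sort _).mp h2
  have hν_max : ∀ y ∈ t₀, y ≤ ν := by
    intro y hy
    have hy' : y ∈ (t₀.sort (· ≤ ·)).reverse := by
      rw [List.mem_reverse]
      exact (Multiset.mem_sort _).mpr hy
    rw [hνr] at hy'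
    rcases List.mem_cons.mp hy' with rfl | hy''
    · exact le_refl _
    · have hsor := Multiset.pairwise_sort t₀ (· ≤ ·)
      have hrev : List.Pairwise (fun a b => b ≤ a) (t₀.sort (· ≤ ·)).reverse := by
        rw [List.pairwise_reverse]
        exact hsor
      rw [hνr, List.pairwise_cons] at hrev
      exact hrev.1 y hy''
  have hrevM : (t.sort (· ≤ ·)).reverse = 0 :: ν :: r := by
    rw [hsortM, List.reverse_append, hνr]
    rfl
  have hlamDown1 : lamDown1 M hM = 0 := by
    show ((t.sort (· ≤ ·)).reverse).getD 0 0 = 0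
    rw [hrevM]
    rfl
  have hlamDown2 : lamDown2 M hM = ν := by
    show ((t.sort (· ≤ ·)).reverse).getD 1 0 = ν
    rw [hrevM]
    rfl
  refine ⟨part1, hlamDown1, ?_, ?_⟩
  · rw [hlamUp2, hlamDown2]
    exact hν_max _ (Multiset.mem_map_of_mem _ hμ_mem)
  · rw [hlamUp2, hlamDown2]
    obtain ⟨x₀, hx₀, rfl⟩ := Multiset.mem_map.mp hν_mem
    have h2 := q_endpoint hδ (hμ_min x₀ hx₀) (hmem_s₀ x₀ hx₀).2
    rwa [q_two] at h2
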